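/- arXiv:1910.07906 — 2 statements merged into one kernel-verified Lean document; each statement's English description precedes it below -/
import Mathlib

section
/- Let Q₁ be an (r₁,s₁,t₁)-inverse quasigroup with J₁ such that J₁^{h₁} ∈ Aut(Q₁), and Q₂ an (r₂,s₂,t₂)-inverse quasigroup with J₂ such that J₂^{h₂} ∈ Aut(Q₂). If there exist integers u₁,u₂ with r−r₁ = s−s₁ = t−t₁ = u₁h₁ and r−r₂ = s−s₂ = t−t₂ = u₂h₂, then Q₁ × Q₂ is an (r,s,t)-inverse quasigroup with permutation J₁ × J₂. -/
private lemma zpow_hom_aux {Q : Type*} [Mul Q] (f : Equiv.Perm Q)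
    (hf : ∀ x y, f (x * y) = f x * f y) :
    ∀ (u : ℤ) (x y : Q), (f ^ u) (x * y) = (f ^ u) x * (f ^ u) y := by
  have hinv : ∀ x y, f⁻¹ (x * y) = f⁻¹ x * f⁻¹ y := by
    intro x y
    apply f.injective
    rw [hf]
    simp [Equiv.Perm.inv_def]
  intro u
  induction u using Int.induction_on with
  | zero => simp
  | succ n ih =>
      intro x y
      have : f ^ ((n : ℤ) + 1) = f ^ (n : ℤ) * f := by
        rw [zpow_add, zpow_one]
      rw [this]
      simp only [Equiv.Perm.mul_apply, hf, ih]
  | pred n ih =>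
      intro x y
      have : f ^ (-(n : ℤ) - 1) = f ^ (-(n : ℤ)) * f⁻¹ := by
        rw [sub_eq_add_neg, zpow_add, zpow_neg_one]
      rw [this]
      simp only [Equiv.Perm.mul_apply, hinv, ih]

private lemma prodCongr_zpow {Q₁ Q₂ : Type*} (J₁ : Equiv.Perm Q₁) (J₂ : Equiv.Perm Q₂)
    (n : ℤ) : (J₁.prodCongr J₂) ^ n = (J₁ ^ n).prodCongr (J₂ ^ n) := by
  have hmul : ∀ (f f' : Equiv.Perm Q₁) (g g' : Equiv.Perm Q₂),
      (f.prodCongr g) * (f'.prodCongr g') = (f * f').prodCongr (g * g') := by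
    intro f f' g g'
    ext p <;> rfl
  induction n using Int.induction_on with
  | zero =>
      ext p <;> rfl
  | succ n ih =>
      rw [zpow_add, zpow_one, zpow_add, zpow_add, zpow_one, zpow_one, ih, hmul]
  | pred n ih =>
      have hinv : ∀ (f : Equiv.Perm Q₁) (g : Equiv.Perm Q₂),
          (f.prodCongr g)⁻¹ = f⁻¹.prodCongr g⁻¹ := by
        intro f g; ext p <;> rfl
      rw [sub_eq_add_neg, zpow_add, zpow_add, zpow_add, zpow_neg_one, zpow_neg_one,
        zpow_neg_one, ih, hinv, hmul]

theorem stmt_8 {Q₁ Q₂ : Type*} [Mul Q₁] [Mul Q₂]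
    (hq₁₁ : ∀ a b : Q₁, ∃! x : Q₁, a * x = b)
    (hq₁₂ : ∀ a b : Q₁, ∃! y : Q₁, y * a = b)
    (hq₂₁ : ∀ a b : Q₂, ∃! x : Q₂, a * x = b)
    (hq₂₂ : ∀ a b : Q₂, ∃! y : Q₂, y * a = b)
    (J₁ : Equiv.Perm Q₁) (J₂ : Equiv.Perm Q₂)
    (r₁ s₁ t₁ r₂ s₂ t₂ h₁ h₂ r s t : ℤ)
    (hi₁ : ∀ x y : Q₁, (J₁ ^ r₁) (x * y) * (J₁ ^ s₁) x = (J₁ ^ t₁) y)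
    (hi₂ : ∀ x y : Q₂, (J₂ ^ r₂) (x * y) * (J₂ ^ s₂) x = (J₂ ^ t₂) y)
    (ha₁ : ∀ x y : Q₁, (J₁ ^ h₁) (x * y) = (J₁ ^ h₁) x * (J₁ ^ h₁) y)
    (ha₂ : ∀ x y : Q₂, (J₂ ^ h₂) (x * y) = (J₂ ^ h₂) x * (J₂ ^ h₂) y)
    (hu : ∃ u₁ u₂ : ℤ,
      r - r₁ = u₁ * h₁ ∧ s - s₁ = u₁ * h₁ ∧ t - t₁ = u₁ * h₁ ∧
      r - r₂ = u₂ * h₂ ∧ s - s₂ = u₂ * h₂ ∧ t - t₂ = u₂ * h₂) :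
    ∀ p q : Q₁ × Q₂,
      ((J₁.prodCongr J₂) ^ r) (p * q) * ((J₁.prodCongr J₂) ^ s) p =
        ((J₁.prodCongr J₂) ^ t) q := by
  obtain ⟨u₁, u₂, hr₁, hs₁, ht₁, hr₂, hs₂, ht₂⟩ := hu
  -- componentwise statements
  have key₁ : ∀ x y : Q₁, (J₁ ^ r) (x * y) * (J₁ ^ s) x = (J₁ ^ t) y := by
    intro x y
    have hhom : ∀ a b : Q₁, (J₁ ^ (u₁ * h₁)) (a * b) =
        (J₁ ^ (u₁ * h₁)) a * (J₁ ^ (u₁ * h₁)) b := by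
      have : J₁ ^ (u₁ * h₁) = (J₁ ^ h₁) ^ u₁ := by
        rw [← zpow_mul, mul_comm]
      rw [this]
      exact zpow_hom_aux (J₁ ^ h₁) ha₁ u₁
    have er : J₁ ^ r = J₁ ^ (u₁ * h₁) * J₁ ^ r₁ := by
      rw [← zpow_add]; congr 1; omega
    have es : J₁ ^ s = J₁ ^ (u₁ * h₁) * J₁ ^ s₁ := by
      rw [← zpow_add]; congr 1; omega
    have et : J₁ ^ t = J₁ ^ (u₁ * h₁) * J₁ ^ t₁ := by
      rw [← zpow_add]; congr 1; omega
    rw [er, es, et]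
    simp only [Equiv.Perm.mul_apply]
    rw [← hhom, hi₁]
  have key₂ : ∀ x y : Q₂, (J₂ ^ r) (x * y) * (J₂ ^ s) x = (J₂ ^ t) y := by
    intro x y
    have hhom : ∀ a b : Q₂, (J₂ ^ (u₂ * h₂)) (a * b) =
        (J₂ ^ (u₂ * h₂)) a * (J₂ ^ (u₂ * h₂)) b := by
      have : J₂ ^ (u₂ * h₂) = (J₂ ^ h₂) ^ u₂ := by
        rw [← zpow_mul, mul_comm]
      rw [this]
      exact zpow_hom_aux (J₂ ^ h₂) ha₂ u₂
    have er : J₂ ^ r = J₂ ^ (u₂ * h₂) * J₂ ^ r₂ := by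
      rw [← zpow_add]; congr 1; omega
    have es : J₂ ^ s = J₂ ^ (u₂ * h₂) * J₂ ^ s₂ := by
      rw [← zpow_add]; congr 1; omega
    have et : J₂ ^ t = J₂ ^ (u₂ * h₂) * J₂ ^ t₂ := by
      rw [← zpow_add]; congr 1; omega
    rw [er, es, et]
    simp only [Equiv.Perm.mul_apply]
    rw [← hhom, hi₂]
  intro p q
  rw [prodCongr_zpow, prodCongr_zpow, prodCongr_zpow]
  ext
  · exact key₁ p.1 q.1
  · exact key₂ p.2 q.2
end

section
/- In the setting of the semi-direct product loop R ⋊ S with multiplication (r,s)(r',s') = (r·φ(s,r'), ss') and permutation J(r,s) = (φ(J_S(s),J_R(r)), J_S(s)): if R ⋊ S is an m-inverse loop with m even, then φ(s,r) = r for all s ∈ S and r ∈ R (i.e., the action is trivial). -/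
private lemma perm_apply_inv_self' {α : Type*} (f : Equiv.Perm α) (x : α) : f (f⁻¹ x) = x :=
  Equiv.apply_symm_apply f x

private lemma semiconj_zpow' {α β : Type*} (σ : Equiv.Perm α) (τ : Equiv.Perm β)
    (g : α → β) (h : ∀ a, g (σ a) = τ (g a)) :
    ∀ (k : ℤ) (a : α), g ((σ ^ k) a) = (τ ^ k) (g a) := by
  have h' : ∀ a, g (σ⁻¹ a) = τ⁻¹ (g a) := by
    intro a
    apply τ.injective
    rw [perm_apply_inv_self', ← h, perm_apply_inv_self']
  intro k
  induction k using Int.induction_on with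
  | zero => simp
  | succ k ih =>
      intro a
      have e : (σ ^ ((k : ℤ) + 1)) a = (σ ^ (k : ℤ)) (σ a) := by
        rw [zpow_add_one, Equiv.Perm.mul_apply]
      rw [e, ih, h, zpow_add_one, Equiv.Perm.mul_apply]
  | pred k ih =>
      intro a
      have e : (σ ^ (-(k : ℤ) - 1)) a = (σ ^ (-(k : ℤ))) (σ⁻¹ a) := by
        rw [zpow_sub_one, Equiv.Perm.mul_apply]
      rw [e, ih, h', zpow_sub_one, Equiv.Perm.mul_apply]

private lemma mul_zpow_perm' {R : Type*} [Mul R] (σ : Equiv.Perm R)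
    (h : ∀ x y : R, σ (x * y) = σ x * σ y) :
    ∀ (k : ℤ) (x y : R), (σ ^ k) (x * y) = (σ ^ k) x * (σ ^ k) y := by
  have h' : ∀ x y : R, σ⁻¹ (x * y) = σ⁻¹ x * σ⁻¹ y := by
    intro x y
    apply σ.injective
    rw [h, perm_apply_inv_self', perm_apply_inv_self',
      perm_apply_inv_self']
  intro k
  induction k using Int.induction_on with
  | zero => simp
  | succ k ih =>
      intro x y
      have e : ∀ z : R, (σ ^ ((k : ℤ) + 1)) z = (σ ^ (k : ℤ)) (σ z) := by
        intro z; rw [zpow_add_one, Equiv.Perm.mul_apply]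
      rw [e, e, e, h, ih]
  | pred k ih =>
      intro x y
      have e : ∀ z : R, (σ ^ (-(k : ℤ) - 1)) z = (σ ^ (-(k : ℤ))) (σ⁻¹ z) := by
        intro z; rw [zpow_sub_one, Equiv.Perm.mul_apply]
      rw [e, e, e, h', ih]


private lemma perm_shift' {α : Type*} (σ : Equiv.Perm α) (a b : ℤ) (x : α) :
    (σ ^ (a + b)) x = (σ ^ a) ((σ ^ b) x) := by
  rw [zpow_add, Equiv.Perm.mul_apply]

private lemma perm_two' {α : Type*} (σ : Equiv.Perm α) (x : α) :
    (σ ^ (2 : ℤ)) x = σ (σ x) := by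
  rw [show (2 : ℤ) = 1 + 1 from rfl, perm_shift', zpow_one]

private lemma perm_cancel2' {α : Type*} (σ : Equiv.Perm α) (x : α) :
    (σ ^ (2 : ℤ)) ((σ ^ (-2 : ℤ)) x) = x := by
  rw [← Equiv.Perm.mul_apply, ← zpow_add]
  norm_num

theorem stmt_12 {R S : Type*} [Mul R] [Mul S] (δR : R) (δS : S)
    (hqR₁ : ∀ a b : R, ∃! x : R, a * x = b)
    (hqR₂ : ∀ a b : R, ∃! y : R, y * a = b)
    (hqS₁ : ∀ a b : S, ∃! x : S, a * x = b)
    (hqS₂ : ∀ a b : S, ∃! y : S, y * a = b)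
    (hδR : ∀ r : R, δR * r = r ∧ r * δR = r)
    (hδS : ∀ s : S, δS * s = s ∧ s * δS = s)
    (JR : Equiv.Perm R) (JS : Equiv.Perm S)
    (hJRδ : JR δR = δR) (hJSδ : JS δS = δS)
    (hinvR : ∀ r : R, r * JR r = δR) (hinvS : ∀ s : S, s * JS s = δS)
    (m₁ m₂ h₁ h₂ m : ℤ)
    (hmR : ∀ x y : R, (JR ^ m₁) (x * y) * (JR ^ (m₁ + 1)) x = (JR ^ m₁) y)
    (hmS : ∀ x y : S, (JS ^ m₂) (x * y) * (JS ^ (m₂ + 1)) x = (JS ^ m₂) y)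
    (haR : ∀ x y : R, (JR ^ h₁) (x * y) = (JR ^ h₁) x * (JR ^ h₁) y)
    (haS : ∀ x y : S, (JS ^ h₂) (x * y) = (JS ^ h₂) x * (JS ^ h₂) y)
    (hc₁ : m ≡ m₁ [ZMOD h₁]) (hc₂ : m ≡ m₂ [ZMOD h₂])
    (φ : S → R → R)
    (hφδ : ∀ r : R, φ δS r = r) (hφδ' : ∀ s : S, φ s δR = δR)
    (hφ1 : ∀ (s s' : S) (r : R),
      φ ((JS ^ m) (s * s')) (φ ((JS ^ (m + 1)) s) r) = φ ((JS ^ m) s') r)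
    (hφ2 : ∀ (s : S) (r r' : R),
      φ s ((JR ^ m) (r * r')) * φ s ((JR ^ (m + 1)) r) = φ s ((JR ^ m) r'))
    (mul : R × S → R × S → R × S)
    (hmul : ∀ p q : R × S, mul p q = (p.1 * φ p.2 q.1, p.2 * q.2))
    (J : Equiv.Perm (R × S))
    (hJ : ∀ p : R × S, J p = (φ (JS p.2) (JR p.1), JS p.2))
    (heven : Even m)
    (hminv : ∀ p q : R × S, mul ((J ^ m) (mul p q)) ((J ^ (m + 1)) p) = (J ^ m) q) :
    ∀ (s : S) (r : R), φ s r = r := by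
  -- fixed points of powers
  have fixS : ∀ k : ℤ, (JS ^ k) δS = δS := by
    intro k
    have := semiconj_zpow' (1 : Equiv.Perm S) JS (fun _ => δS)
      (by intro a; simp [hJSδ]) k δS
    simpa using this.symm
  -- φ t and φ (JS t) are mutually inverse
  have Kfwd : ∀ (t : S) (r : R), φ t (φ (JS t) r) = r := by
    intro t r
    have h1 := hφ1 ((JS ^ (-m)) t) δS r
    rw [(hδS ((JS ^ (-m)) t)).2] at h1
    have e1 : (JS ^ m) ((JS ^ (-m)) t) = t := by
      rw [← Equiv.Perm.mul_apply, ← zpow_add]; simp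
    have e2 : (JS ^ (m + 1)) ((JS ^ (-m)) t) = JS t := by
      rw [← Equiv.Perm.mul_apply, ← zpow_add,
        show m + 1 + -m = 1 by ring, zpow_one]
    rw [e1, e2, fixS, hφδ] at h1
    exact h1
  have hinjφ : ∀ t : S, Function.Injective (φ t) := by
    intro t x y hxy
    have hleft : ∀ r : R, φ (JS⁻¹ t) (φ t r) = r := by
      intro r
      have := Kfwd (JS⁻¹ t) r
      rwa [perm_apply_inv_self'] at this
    rw [← hleft x, hxy, hleft]
  have Kbwd : ∀ (t : S) (r : R), φ (JS t) (φ t r) = r := by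
    intro t r
    apply hinjφ t
    rw [Kfwd]
  have hsurjφ : ∀ (t : S) (b : R), ∃ c : R, φ t c = b := by
    intro t b
    exact ⟨φ (JS t) b, Kfwd t b⟩
  -- m-inverse property at exponent m for R
  obtain ⟨k, hk⟩ := Int.ModEq.dvd hc₁
  have hmulk : ∀ x y : R,
      (JR ^ (h₁ * (-k))) (x * y) = (JR ^ (h₁ * (-k))) x * (JR ^ (h₁ * (-k))) y := by
    intro x y
    have := mul_zpow_perm' (JR ^ h₁) haR (-k) x y
    rwa [← zpow_mul] at this
  have hmRm : ∀ x y : R, (JR ^ m) (x * y) * (JR ^ (m + 1)) x = (JR ^ m) y := by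
    intro x y
    have e1 : m = h₁ * (-k) + m₁ := by linarith
    have e2 : m + 1 = h₁ * (-k) + (m₁ + 1) := by linarith
    have c1 : ∀ z : R, (JR ^ m) z = (JR ^ (h₁ * (-k))) ((JR ^ m₁) z) := by
      intro z; rw [← Equiv.Perm.mul_apply, ← zpow_add, ← e1]
    have c2 : ∀ z : R, (JR ^ (m + 1)) z = (JR ^ (h₁ * (-k))) ((JR ^ (m₁ + 1)) z) := by
      intro z; rw [← Equiv.Perm.mul_apply, ← zpow_add, ← e2]
    rw [c1, c2, c1, ← hmulk, hmR]
  -- component lemmas for J powers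
  have eR : ∀ (kk : ℤ) (r : R), (J ^ kk) (r, δS) = ((JR ^ kk) r, δS) := by
    intro kk r
    have := semiconj_zpow' JR J (fun x => (x, δS))
      (by intro a; rw [hJ]; simp [hJSδ, hφδ]) kk r
    simpa using this.symm
  have eS : ∀ (kk : ℤ) (s : S), (J ^ kk) (δR, s) = (δR, (JS ^ kk) s) := by
    intro kk s
    have := semiconj_zpow' JS J (fun x => (δR, x))
      (by intro a; rw [hJ]; simp [hJRδ, hφδ']) kk s
    simpa using this.symm
  have comp2 : ∀ (kk : ℤ) (p : R × S), ((J ^ kk) p).2 = (JS ^ kk) p.2 := by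
    intro kk p
    exact semiconj_zpow' J JS Prod.snd (by intro a; rw [hJ]) kk p
  -- key consequence (A'): first component of J^m on (φ s r, s)
  have hA1 : ∀ (s : S) (r : R), ((J ^ m) (φ s r, s)).1 = (JR ^ m) r := by
    intro s r
    have h0 := hminv (δR, s) (r, δS)
    have e0 : mul (δR, s) (r, δS) = (φ s r, s) := by
      rw [hmul]
      show (δR * φ s r, s * δS) = _
      rw [(hδR (φ s r)).1, (hδS s).2]
    rw [e0, eS (m + 1) s, eR m r, hmul, Prod.mk.injEq] at h0
    obtain ⟨h1, -⟩ := h0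
    simp only [hφδ'] at h1
    rwa [(hδR (((J ^ m) (φ s r, s)).1)).2] at h1
  -- key consequence (*2)
  have star2 : ∀ (s : S) (r r' : R),
      ((J ^ m) (r * φ s r', s)).1 * JR (((J ^ m) (r, s)).1) = (JR ^ m) r' := by
    intro s r r'
    have h0 := hminv (r, s) (r', δS)
    have e0 : mul (r, s) (r', δS) = (r * φ s r', s) := by
      rw [hmul]
      show (r * φ s r', s * δS) = _
      rw [(hδS s).2]
    have e1 : (J ^ (m + 1)) (r, s) = J ((J ^ m) (r, s)) := by
      rw [show m + (1 : ℤ) = 1 + m by ring, zpow_add, zpow_one, Equiv.Perm.mul_apply]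
    rw [e0, e1, hJ ((J ^ m) (r, s)), eR m r', hmul, Prod.mk.injEq] at h0
    obtain ⟨h1, -⟩ := h0
    simp only [comp2] at h1
    rwa [Kfwd ((JS ^ m) s)] at h1
  -- each φ s is multiplicative
  have hAut : ∀ (s : S) (a b : R), φ s (a * b) = φ s a * φ s b := by
    intro s a b
    obtain ⟨c, hc⟩ := hsurjφ s (φ s a * φ s b)
    have h1 := star2 s (φ s a) b
    rw [← hc, hA1 s c, hA1 s a] at h1
    have h2 := hmRm a b
    have e : (JR ^ (m + 1)) a = JR ((JR ^ m) a) := by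
      rw [show m + (1 : ℤ) = 1 + m by ring, zpow_add, zpow_one, Equiv.Perm.mul_apply]
    rw [e] at h2
    obtain ⟨y, -, hu⟩ := hqR₂ (JR ((JR ^ m) a)) ((JR ^ m) b)
    have hce : (JR ^ m) c = (JR ^ m) (a * b) := by
      rw [hu _ h1, hu _ h2]
    have : c = a * b := (JR ^ m).injective hce
    rw [this] at hc
    rw [hc]
  -- φ s commutes with JR
  have hcomm : ∀ (s : S) (x : R), φ s (JR x) = JR (φ s x) := by
    intro s x
    have h1 : φ s x * φ s (JR x) = δR := by rw [← hAut, hinvR, hφδ']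
    have h2 : φ s x * JR (φ s x) = δR := hinvR _
    obtain ⟨y, -, hu⟩ := hqR₁ (φ s x) δR
    rw [hu _ h1, hu _ h2]
  -- J squared is componentwise
  have L2 : ∀ p : R × S, (J ^ (2 : ℤ)) p = ((JR ^ (2 : ℤ)) p.1, (JS ^ (2 : ℤ)) p.2) := by
    intro p
    rw [perm_two' J, hJ p, hJ]
    show (φ (JS (JS p.2)) (JR (φ (JS p.2) (JR p.1))), JS (JS p.2))
      = ((JR ^ (2 : ℤ)) p.1, (JS ^ (2 : ℤ)) p.2)
    rw [perm_two' JR, perm_two' JS, ← hcomm, Kbwd]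
  have Jeven : ∀ (n : ℤ) (p : R × S),
      (J ^ (2 * n)) p = ((JR ^ (2 * n)) p.1, (JS ^ (2 * n)) p.2) := by
    have L2' : ∀ q : R × S,
        (J ^ (-2 : ℤ)) q = ((JR ^ (-2 : ℤ)) q.1, (JS ^ (-2 : ℤ)) q.2) := by
      intro q
      apply (J ^ (2 : ℤ)).injective
      rw [perm_cancel2', L2]
      show q = ((JR ^ (2 : ℤ)) ((JR ^ (-2 : ℤ)) q.1), (JS ^ (2 : ℤ)) ((JS ^ (-2 : ℤ)) q.2))
      rw [perm_cancel2', perm_cancel2']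
    intro n
    induction n using Int.induction_on with
    | zero => intro p; simp
    | succ k ih =>
        intro p
        have e2 : (2 : ℤ) * ((k : ℤ) + 1) = 2 * (k : ℤ) + 2 := by ring
        rw [e2, perm_shift' J, L2, ih]
        show ((JR ^ (2 * (k : ℤ))) ((JR ^ (2 : ℤ)) p.1), (JS ^ (2 * (k : ℤ))) ((JS ^ (2 : ℤ)) p.2))
          = ((JR ^ (2 * (k : ℤ) + 2)) p.1, (JS ^ (2 * (k : ℤ) + 2)) p.2)
        rw [← perm_shift', ← perm_shift']
    | pred k ih =>
        intro p
        have e2 : (2 : ℤ) * (-(k : ℤ) - 1) = 2 * (-(k : ℤ)) + (-2) := by ring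
        rw [e2, perm_shift' J, L2', ih]
        show ((JR ^ (2 * (-(k : ℤ)))) ((JR ^ (-2 : ℤ)) p.1),
            (JS ^ (2 * (-(k : ℤ)))) ((JS ^ (-2 : ℤ)) p.2))
          = ((JR ^ (2 * (-(k : ℤ)) + (-2))) p.1, (JS ^ (2 * (-(k : ℤ)) + (-2))) p.2)
        rw [← perm_shift', ← perm_shift']
  -- conclude
  intro s r
  obtain ⟨n, hn'⟩ := heven
  have hm2 : m = 2 * n := by linarith
  have h1 := hA1 s r
  rw [hm2] at h1
  rw [Jeven n (φ s r, s)] at h1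
  exact (JR ^ (2 * n)).injective h1
end
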